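/- Let a1 < a2 ≤ b1 < b2 be real numbers and set αj = 1 + aj·i, βj = 1 + bj·i for j = 1,2. Then the Minkowski product K(α1,α2)K(β1,β2) equals the convex hull K(α1β1, α1β2, α2β1, α2β2). -/

import Mathlib

open Complex Set

lemma seg_mem' (x y t : ℝ) (hxy : x < y) (hx : x ≤ t) (ht : t ≤ y) :
    (1 : ℂ) + t * Complex.I ∈ segment ℝ (1 + x * Complex.I) (1 + y * Complex.I) := by
  have hyx : (0:ℝ) < y - x := by linarith
  refine ⟨(y - t) / (y - x), (t - x) / (y - x),
    div_nonneg (by linarith) hyx.le, div_nonneg (by linarith) hyx.le, ?_, ?_⟩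
  · field_simp
    ring
  · simp only [Complex.real_smul]
    push_cast
    have : (y : ℂ) - x ≠ 0 := by
      intro h
      exact hyx.ne' (by simpa using congrArg Complex.re h)
    field_simp
    ring


theorem stmt_5 (a1 a2 b1 b2 : ℝ) (h1 : a1 < a2) (h2 : a2 ≤ b1) (h3 : b1 < b2) :
    Set.image2 (· * ·)
        (segment ℝ (1 + a1 * Complex.I) (1 + a2 * Complex.I))
        (segment ℝ (1 + b1 * Complex.I) (1 + b2 * Complex.I)) =
      convexHull ℝ
        ({(1 + a1 * Complex.I) * (1 + b1 * Complex.I),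
          (1 + a1 * Complex.I) * (1 + b2 * Complex.I),
          (1 + a2 * Complex.I) * (1 + b1 * Complex.I),
          (1 + a2 * Complex.I) * (1 + b2 * Complex.I)} : Set ℂ) := by
  apply Set.Subset.antisymm
  · set A1 : ℂ := 1 + a1 * Complex.I
    set A2 : ℂ := 1 + a2 * Complex.I
    set B1 : ℂ := 1 + b1 * Complex.I
    set B2 : ℂ := 1 + b2 * Complex.I
    set S : Set ℂ := {A1 * B1, A1 * B2, A2 * B1, A2 * B2} with hS
    have hC : Convex ℝ (convexHull ℝ S) := convex_convexHull ℝ S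
    have h11 : A1 * B1 ∈ convexHull ℝ S := subset_convexHull ℝ S (by simp [hS])
    have h12 : A1 * B2 ∈ convexHull ℝ S := subset_convexHull ℝ S (by simp [hS])
    have h21 : A2 * B1 ∈ convexHull ℝ S := subset_convexHull ℝ S (by simp [hS])
    have h22 : A2 * B2 ∈ convexHull ℝ S := subset_convexHull ℝ S (by simp [hS])
    rintro _ ⟨x, hx, y, hy, rfl⟩
    obtain ⟨p, q, hp, hq, hpq, rfl⟩ := hx
    obtain ⟨r, t, hr, ht, hrt, rfl⟩ := hy
    have e : (p • A1 + q • A2) * (r • B1 + t • B2)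
        = p • (r • (A1 * B1) + t • (A1 * B2)) + q • (r • (A2 * B1) + t • (A2 * B2)) := by
      simp only [Complex.real_smul]
      ring
    simp only [] at e ⊢
    show (p • A1 + q • A2) * (r • B1 + t • B2) ∈ _
    rw [e]
    exact hC (hC h11 h12 hr ht hrt) (hC h21 h22 hr ht hrt) hp hq hpq

  · intro z hz
    rw [show ({(1 + a1 * Complex.I) * (1 + b1 * Complex.I),
            (1 + a1 * Complex.I) * (1 + b2 * Complex.I),
            (1 + a2 * Complex.I) * (1 + b1 * Complex.I),
            (1 + a2 * Complex.I) * (1 + b2 * Complex.I)} : Set ℂ)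
        = insert ((1 + a1 * Complex.I) * (1 + b1 * Complex.I))
            (insert ((1 + a1 * Complex.I) * (1 + b2 * Complex.I))
              {(1 + a2 * Complex.I) * (1 + b1 * Complex.I),
               (1 + a2 * Complex.I) * (1 + b2 * Complex.I)}) from rfl,
      convexHull_insert (by simp), convexHull_insert (by simp), convexHull_pair] at hz
    simp only [mem_convexJoin, mem_singleton_iff] at hz
    obtain ⟨_, rfl, w, ⟨_, rfl, v, hv, hw⟩, hzseg⟩ := hz
    obtain ⟨s3, t3, hs3, ht3, hst3, rfl⟩ := hv
    obtain ⟨s2, t2, hs2, ht2, hst2, rfl⟩ := hw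
    obtain ⟨s1, t1, hs1, ht1, hst1, hz1⟩ := hzseg
    -- weights
    obtain ⟨u, hu⟩ : ∃ u : ℝ, u = s1*(a1+b1) + t1*s2*(a1+b2) + t1*t2*s3*(a2+b1) + t1*t2*t3*(a2+b2) := ⟨_, rfl⟩
    obtain ⟨c, hc⟩ : ∃ c : ℝ, c = s1*(a1*b1) + t1*s2*(a1*b2) + t1*t2*s3*(a2*b1) + t1*t2*t3*(a2*b2) := ⟨_, rfl⟩
    have key : ∀ x : ℝ, x^2 - u*x + c
        = s1*((x-a1)*(x-b1)) + (t1*s2)*((x-a1)*(x-b2))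
          + (t1*t2*s3)*((x-a2)*(x-b1)) + (t1*t2*t3)*((x-a2)*(x-b2)) := by
      intro x
      rw [hu, hc]
      linear_combination (-x^2) * hst1 + (-x^2*t1) * hst2 + (-x^2*t1*t2) * hst3
    have qa1 : 0 ≤ a1^2 - u*a1 + c := by
      rw [key a1]
      nlinarith [mul_nonneg (mul_nonneg (mul_nonneg ht1 ht2) hs3)
          (mul_nonneg (by linarith : (0:ℝ) ≤ a2 - a1) (by linarith : (0:ℝ) ≤ b1 - a1)),
        mul_nonneg (mul_nonneg (mul_nonneg ht1 ht2) ht3)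
          (mul_nonneg (by linarith : (0:ℝ) ≤ a2 - a1) (by linarith : (0:ℝ) ≤ b2 - a1))]
    have qa2 : a2^2 - u*a2 + c ≤ 0 := by
      rw [key a2]
      nlinarith [mul_nonneg hs1
          (mul_nonneg (by linarith : (0:ℝ) ≤ a2 - a1) (by linarith : (0:ℝ) ≤ b1 - a2)),
        mul_nonneg (mul_nonneg ht1 hs2)
          (mul_nonneg (by linarith : (0:ℝ) ≤ a2 - a1) (by linarith : (0:ℝ) ≤ b2 - a2))]
    have qb1 : b1^2 - u*b1 + c ≤ 0 := by
      rw [key b1]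
      nlinarith [mul_nonneg (mul_nonneg ht1 hs2)
          (mul_nonneg (by linarith : (0:ℝ) ≤ b1 - a1) (by linarith : (0:ℝ) ≤ b2 - b1)),
        mul_nonneg (mul_nonneg (mul_nonneg ht1 ht2) ht3)
          (mul_nonneg (by linarith : (0:ℝ) ≤ b1 - a2) (by linarith : (0:ℝ) ≤ b2 - b1))]
    have qb2 : 0 ≤ b2^2 - u*b2 + c := by
      rw [key b2]
      nlinarith [mul_nonneg hs1
          (mul_nonneg (by linarith : (0:ℝ) ≤ b2 - a1) (by linarith : (0:ℝ) ≤ b2 - b1)),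
        mul_nonneg (mul_nonneg ht1 hs2)
          (mul_nonneg (by linarith : (0:ℝ) ≤ b2 - a1) (by linarith : (0:ℝ) ≤ b2 - b2)),
        mul_nonneg (mul_nonneg (mul_nonneg ht1 ht2) hs3)
          (mul_nonneg (by linarith : (0:ℝ) ≤ b2 - a2) (by linarith : (0:ℝ) ≤ b2 - b1)),
        mul_nonneg (mul_nonneg (mul_nonneg ht1 ht2) ht3)
          (mul_nonneg (by linarith : (0:ℝ) ≤ b2 - a2) (by linarith : (0:ℝ) ≤ b2 - b2))]
    have disc : 0 ≤ u^2 - 4*c := by nlinarith [qa2, sq_nonneg (2*a2 - u)]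
    obtain ⟨d, hdd⟩ : ∃ d : ℝ, d = Real.sqrt (u^2 - 4*c) := ⟨_, rfl⟩
    have hd0 : 0 ≤ d := hdd ▸ Real.sqrt_nonneg _
    have hd2 : d^2 = u^2 - 4*c := hdd ▸ Real.sq_sqrt disc
    obtain ⟨a, ha⟩ : ∃ a : ℝ, a = (u - d)/2 := ⟨_, rfl⟩
    obtain ⟨b, hb⟩ : ∃ b : ℝ, b = (u + d)/2 := ⟨_, rfl⟩
    have hsum : a + b = u := by rw [ha, hb]; ring
    have hprod : a * b = c := by rw [ha, hb]; linear_combination (-(1:ℝ)/4) * hd2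
    have hab : a ≤ b := by rw [ha, hb]; linarith
    have Qa1 : 0 ≤ (a1 - a) * (a1 - b) := by
      have e : (a1 - a) * (a1 - b) = a1^2 - u*a1 + c := by
        linear_combination (-a1) * hsum + hprod
      rw [e]; exact qa1
    have Qa2 : (a2 - a) * (a2 - b) ≤ 0 := by
      have e : (a2 - a) * (a2 - b) = a2^2 - u*a2 + c := by
        linear_combination (-a2) * hsum + hprod
      rw [e]; exact qa2
    have Qb1 : (b1 - a) * (b1 - b) ≤ 0 := by
      have e : (b1 - a) * (b1 - b) = b1^2 - u*b1 + c := by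
        linear_combination (-b1) * hsum + hprod
      rw [e]; exact qb1
    have Qb2 : 0 ≤ (b2 - a) * (b2 - b) := by
      have e : (b2 - a) * (b2 - b) = b2^2 - u*b2 + c := by
        linear_combination (-b2) * hsum + hprod
      rw [e]; exact qb2
    have haa2 : a ≤ a2 := by
      by_contra h
      push_neg at h
      exact Qa2.not_gt (mul_pos_of_neg_of_neg (by linarith) (by linarith))
    have ha2b : a2 ≤ b := by
      by_contra h
      push_neg at h
      exact Qa2.not_gt (mul_pos (by linarith) (by linarith))
    have hb1b : b1 ≤ b := by
      by_contra h
      push_neg at h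
      exact Qb1.not_gt (mul_pos (by linarith) (by linarith))
    have hab1 : a ≤ b1 := by
      by_contra h
      push_neg at h
      exact Qb1.not_gt (mul_pos_of_neg_of_neg (by linarith) (by linarith))
    have ha1a : a1 ≤ a := by
      by_contra h
      push_neg at h
      exact ((mul_neg_of_pos_of_neg (by linarith) (by linarith : a1 - b < 0)).not_ge) Qa1
    have hbb2 : b ≤ b2 := by
      by_contra h
      push_neg at h
      exact ((mul_neg_of_pos_of_neg (by linarith : (0:ℝ) < b2 - a) (by linarith : b2 - b < 0)).not_ge) Qb2
    refine ⟨1 + (a:ℂ) * Complex.I, seg_mem' a1 a2 a h1 ha1a haa2,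
            1 + (b:ℂ) * Complex.I, seg_mem' b1 b2 b h3 hb1b hbb2, ?_⟩
    show (1 + (a:ℂ) * Complex.I) * (1 + (b:ℂ) * Complex.I) = z
    rw [← hz1]
    simp only [Complex.real_smul]
    rw [Complex.ext_iff]
    constructor
    · simp only [Complex.add_re, Complex.mul_re, Complex.add_im, Complex.mul_im,
        Complex.one_re, Complex.one_im, Complex.I_re, Complex.I_im,
        Complex.ofReal_re, Complex.ofReal_im]
      ring_nf
      linear_combination (-1 : ℝ) * hprod + (-1 : ℝ) * hc + (-1 : ℝ) * hst1
        + (-t1) * hst2 + (-(t1*t2)) * hst3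
    · simp only [Complex.add_re, Complex.mul_re, Complex.add_im, Complex.mul_im,
        Complex.one_re, Complex.one_im, Complex.I_re, Complex.I_im,
        Complex.ofReal_re, Complex.ofReal_im]
      ring_nf
      linear_combination hsum + hu
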